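/- Let n, k ∈ ℕ and let f : ℝⁿ → ℝ be C^(k+1) with identically vanishing (k+1)-st iterated derivative (iteratedFDeriv ℝ (k+1) f x = 0 for all x) and satisfying the Euler identity Df(x)(x) = k · f(x) for all x ∈ ℝⁿ. Then f(t • x) = t^k · f(x) for every real t (of arbitrary sign) and every x ∈ ℝⁿ; i.e. f is a homogeneous function of degree k on all of ℝⁿ. -/

import Mathlib

private lemma euler_aux : ∀ (k : ℕ) (h : ℝ → ℝ), ContDiff ℝ (k + 1) h →
    (∀ t, iteratedDeriv (k + 1) h t = 0) → (∀ t, t * deriv h t = k * h t) →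
    ∀ t : ℝ, h t = t ^ k * h 1 := by
  intro k
  induction k with
  | zero =>
    intro h hd hz _ t
    have hdiff : Differentiable ℝ h := hd.differentiable (by norm_num)
    have hder : ∀ s, deriv h s = 0 := by
      intro s
      have := hz s
      rwa [iteratedDeriv_one] at this
    simpa using is_const_of_deriv_eq_zero hdiff hder t 1
  | succ k ih =>
    intro h hd hz he t
    have hd' : ContDiff ℝ ((k : WithTop ℕ∞) + 1 + 1) h := by
      convert hd using 2
      norm_cast
    rw [contDiff_succ_iff_deriv] at hd'
    have hdiff : Differentiable ℝ h := hd'.1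
    have hH : ContDiff ℝ (k + 1) (deriv h) := hd'.2.2
    have hHdiff : Differentiable ℝ (deriv h) := hH.differentiable (by
      simp)
    have hzH : ∀ s, iteratedDeriv (k + 1) (deriv h) s = 0 := by
      intro s
      have := hz s
      rwa [iteratedDeriv_succ'] at this
    have heH : ∀ s, s * deriv (deriv h) s = k * deriv h s := by
      intro s
      have hfun : (fun u : ℝ => u * deriv h u) = fun u => ((k : ℝ) + 1) * h u := by
        funext u
        have := he u
        push_cast at this
        linarith
      have h1 : deriv (fun u : ℝ => u * deriv h u) s
          = deriv h s + s * deriv (deriv h) s := by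
        rw [deriv_fun_mul differentiableAt_fun_id (hHdiff s)]
        simp
      have h2 : deriv (fun u : ℝ => ((k : ℝ) + 1) * h u) s
          = ((k : ℝ) + 1) * deriv h s := by
        rw [deriv_const_mul _ (hdiff s)]
      rw [hfun, h2] at h1
      linarith
    have hder : ∀ s, deriv h s = s ^ k * deriv h 1 := ih (deriv h) hH hzH heH
    have hH1 : deriv h 1 = ((k : ℝ) + 1) * h 1 := by
      have := he 1
      push_cast at this
      linarith
    -- the function h t - h 1 * t^(k+1) has zero derivative
    set φ : ℝ → ℝ := fun u => h u - h 1 * u ^ (k + 1) with hφ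
    have hφdiff : Differentiable ℝ φ := hdiff.sub ((differentiable_pow (k+1)).const_mul _)
    have hφder : ∀ s, deriv φ s = 0 := by
      intro s
      have hpow : HasDerivAt (fun u : ℝ => h 1 * u ^ (k + 1))
          (h 1 * (((k : ℝ) + 1) * s ^ k)) s := by
        have := (hasDerivAt_pow (k + 1) s).const_mul (h 1)
        simpa [mul_comm, mul_assoc, mul_left_comm] using this
      have : HasDerivAt φ (deriv h s - h 1 * (((k : ℝ) + 1) * s ^ k)) s :=
        ((hdiff s).hasDerivAt).sub hpow
      rw [this.deriv, hder s, hH1]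
      ring
    have := is_const_of_deriv_eq_zero hφdiff hφder t 1
    simp only [hφ] at this
    have h1 : h t - h 1 * t ^ (k + 1) = h 1 - h 1 * 1 ^ (k + 1) := this
    rw [one_pow] at h1
    linarith [h1]

/-- A `C^(k+1)` function `f : ℝⁿ → ℝ` whose `(k+1)`-st iterated derivative vanishes
identically (i.e. a polynomial function of degree `≤ k`) and which satisfies the Euler
identity `Df(x)(x) = k·f(x)` everywhere is homogeneous of degree `k` on all of `ℝⁿ`:
`f(t • x) = t^k · f(x)` for every real `t` and every `x`. -/
theorem euler_polynomial_homogeneous (n k : ℕ) (f : (Fin n → ℝ) → ℝ)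
    (hf : ContDiff ℝ (k + 1) f)
    (hvan : ∀ x : Fin n → ℝ, iteratedFDeriv ℝ (k + 1) f x = 0)
    (heuler : ∀ x : Fin n → ℝ, fderiv ℝ f x x = k * f x) :
    ∀ (t : ℝ) (x : Fin n → ℝ), f (t • x) = t ^ k * f x := by
  intro t x
  set L : ℝ →L[ℝ] (Fin n → ℝ) := (ContinuousLinearMap.id ℝ ℝ).smulRight x with hL
  have hLapp : ∀ s : ℝ, L s = s • x := by intro s; simp [hL]
  set g : ℝ → ℝ := f ∘ L with hg
  have hgC : ContDiff ℝ (k + 1) g := hf.comp L.contDiff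
  have hdiff : Differentiable ℝ f := hf.differentiable (by
    simp)
  have hgder : ∀ s, deriv g s = fderiv ℝ f (L s) x := by
    intro s
    have hLd : HasDerivAt (fun u : ℝ => L u) x s := by
      have h := L.hasDerivAt (x := s)
      rw [hLapp] at h
      simpa using h
    have : HasDerivAt g (fderiv ℝ f (L s) x) s :=
      ((hdiff (L s)).hasFDerivAt).comp_hasDerivAt s hLd
    exact this.deriv
  have hzg : ∀ s, iteratedDeriv (k + 1) g s = 0 := by
    intro s
    rw [iteratedDeriv_eq_iteratedFDeriv, hg,
      L.iteratedFDeriv_comp_right hf s (i := k + 1) (by exact_mod_cast le_rfl),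
      hvan (L s)]
    simp
  have heg : ∀ s, s * deriv g s = k * g s := by
    intro s
    rw [hgder s]
    have h1 : s * (fderiv ℝ f (L s)) x = (fderiv ℝ f (L s)) (s • x) := by
      rw [map_smul]; simp
    rw [h1, ← hLapp s, heuler (L s)]
    rfl
  have := euler_aux k g hgC hzg heg t
  simpa [hg, Function.comp, hLapp] using this
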